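/- Let H be a real Hilbert space, T > 0, and let v ∈ L²((-∞,T); H) satisfy v(t) = 0 for almost every t ≤ 0. Then ∫_{-∞}^{T} ∫_{-∞}^{T} ‖v(t) − v(s)‖_H² |t−s|^{-2} ds dt = ∫_{0}^{T} ∫_{0}^{T} ‖v(t) − v(s)‖_H² |t−s|^{-2} ds dt + 2 ∫_{0}^{T} t^{-1} ‖v(t)‖_H² dt (as an identity in [0,∞]). -/

import Mathlib

open MeasureTheory Set

private lemma map_sub_left_volume (s : ℝ) :
    Measure.map (fun t : ℝ => s - t) volume = volume := by
  have h : (fun t : ℝ => s - t) = (fun t : ℝ => s + t) ∘ (fun t : ℝ => -t) := by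
    funext t; simp [sub_eq_add_neg]
  rw [h, ← Measure.map_map (measurable_const_add s) measurable_neg,
    Measure.map_neg_eq_self, map_add_left_eq_self]

private lemma hardy_slice {s : ℝ} (hs : 0 < s) :
    ∫⁻ t in Iio (0:ℝ), ENNReal.ofReal (1 / (s - t) ^ 2) = ENNReal.ofReal (1 / s) := by
  have hφ : Measurable fun t : ℝ => s - t := measurable_const.sub measurable_id
  have hg : Measurable fun u : ℝ => ENNReal.ofReal (1 / u ^ 2) :=
    ENNReal.measurable_ofReal.comp (measurable_const.div (measurable_id.pow_const 2))
  have hpre : (fun t : ℝ => s - t) ⁻¹' (Ioi s) = Iio 0 := by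
    ext t
    simp only [mem_preimage, mem_Ioi, mem_Iio]
    constructor <;> intro h <;> linarith
  have h1 : ∫⁻ u in Ioi s, ENNReal.ofReal (1 / u ^ 2)
      = ∫⁻ t in Iio (0:ℝ), ENNReal.ofReal (1 / (s - t) ^ 2) := by
    conv_lhs => rw [← map_sub_left_volume s]
    rw [Measure.restrict_map hφ measurableSet_Ioi, hpre, lintegral_map hg hφ]
  rw [← h1]
  have hint : IntegrableOn (fun u : ℝ => 1 / u ^ 2) (Ioi s) := by
    refine (integrableOn_Ioi_rpow_of_lt (by norm_num : (-2:ℝ) < -1) hs).congr_fun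
      (fun u hu => ?_) measurableSet_Ioi
    have hu0 : 0 < u := hs.trans hu
    dsimp only
    rw [Real.rpow_neg hu0.le, show ((2:ℝ)) = ((2:ℕ):ℝ) by norm_num, Real.rpow_natCast]
    simp [one_div]
  have hval : ∫ u in Ioi s, 1 / u ^ 2 = 1 / s := by
    have := integral_Ioi_rpow_of_lt (by norm_num : (-2:ℝ) < -1) hs
    rw [show ∫ u in Ioi s, (1:ℝ) / u ^ 2 = ∫ u in Ioi s, u ^ (-2:ℝ) from
      setIntegral_congr_fun measurableSet_Ioi (fun u hu => by
        have hu0 : 0 < u := hs.trans hu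
        rw [Real.rpow_neg hu0.le, show ((2:ℝ)) = ((2:ℕ):ℝ) by norm_num, Real.rpow_natCast]
        simp [one_div]), this]
    rw [show (-2:ℝ) + 1 = -1 by norm_num, Real.rpow_neg_one]
    field_simp
  rw [← ofReal_integral_eq_lintegral_ofReal hint
    (ae_restrict_of_ae (Filter.Eventually.of_forall fun u => by positivity)), hval]

theorem stmt_0 {H : Type*} [NormedAddCommGroup H] [InnerProductSpace ℝ H]
    [CompleteSpace H]
    (T : ℝ) (hT : 0 < T) (v : ℝ → H)
    (hv : MemLp v 2 (volume.restrict (Iio T)))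
    (h0 : ∀ᵐ t ∂(volume : Measure ℝ), t ≤ 0 → v t = 0) :
    (∫⁻ t in Iio T, ∫⁻ s in Iio T, ENNReal.ofReal (‖v t - v s‖ ^ 2 / |t - s| ^ 2))
      = (∫⁻ t in Ioo 0 T, ∫⁻ s in Ioo 0 T,
          ENNReal.ofReal (‖v t - v s‖ ^ 2 / |t - s| ^ 2))
        + 2 * ∫⁻ t in Ioo 0 T, ENNReal.ofReal (‖v t‖ ^ 2 / t) := by
  classical
  set w : ℝ → H := hv.1.mk v with hwdef
  have hw : StronglyMeasurable w := hv.1.stronglyMeasurable_mk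
  have hvw : v =ᵐ[volume.restrict (Iio T)] w := hv.1.ae_eq_mk
  -- measurability of the integrand
  have hFm : Measurable fun p : ℝ × ℝ =>
      ENNReal.ofReal (‖w p.1 - w p.2‖ ^ 2 / |p.1 - p.2| ^ 2) := by
    apply ENNReal.measurable_ofReal.comp
    exact (((((hw.comp_measurable measurable_fst).sub
      (hw.comp_measurable measurable_snd)).norm).measurable.pow_const 2).div
      (((measurable_fst.sub measurable_snd).abs).pow_const 2))
  -- a.e. equalities on subsets
  have hsubN : Iio (0:ℝ) ⊆ Iio T := fun t ht => lt_trans ht hT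
  have hsubP : Ioo (0:ℝ) T ⊆ Iio T := fun t ht => ht.2
  have hvwN : v =ᵐ[volume.restrict (Iio (0:ℝ))] w :=
    ae_mono (Measure.restrict_mono hsubN le_rfl) hvw
  have hvwP : v =ᵐ[volume.restrict (Ioo (0:ℝ) T)] w :=
    ae_mono (Measure.restrict_mono hsubP le_rfl) hvw
  have hw0 : ∀ᵐ t ∂(volume.restrict (Iio (0:ℝ))), w t = 0 := by
    filter_upwards [hvwN, ae_restrict_of_ae h0, ae_restrict_mem measurableSet_Iio]
      with t h1 h2 h3
    rw [← h1]; exact h2 h3.le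
  -- measure decomposition
  have hNP : volume.restrict (Iio T) =
      volume.restrict (Iio (0:ℝ)) + volume.restrict (Ioo (0:ℝ) T) := by
    rw [← Measure.restrict_union (by
        simp only [Set.disjoint_left, mem_Iio, mem_Ioo]
        intro a ha hb; linarith [hb.1]) measurableSet_Ioo]
    apply Measure.restrict_congr_set
    rw [MeasureTheory.ae_eq_set]
    constructor
    · refine measure_mono_null (fun t ht => ?_) (measure_singleton (0:ℝ))
      simp only [mem_diff, mem_Iio, mem_union, mem_Ioo, not_or, not_lt, not_and] at ht
      have h1 := ht.2.1
      have h2 := ht.2.2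
      simp only [mem_singleton_iff]
      rcases lt_or_eq_of_le h1 with h | h
      · exact absurd ht.1 (not_lt.mpr (le_of_lt (lt_of_le_of_lt (le_of_eq rfl) (absurd (h2 h) (by intro hh; linarith [ht.1])))))
      · exact h.symm
    · refine measure_mono_null (fun t ht => ?_) (measure_empty (μ := volume))
      simp only [mem_diff, mem_union, mem_Iio, mem_Ioo, not_lt] at ht
      rcases ht.1 with h | h
      · exact absurd (lt_trans h hT) (not_lt.mpr ht.2)
      · exact absurd h.2 (not_lt.mpr ht.2)
  -- switch v to w everywhere
  have convDouble : ∀ (μ ν : Measure ℝ), μ ≤ volume.restrict (Iio T) →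
      ν ≤ volume.restrict (Iio T) →
      (∫⁻ t, ∫⁻ s, ENNReal.ofReal (‖v t - v s‖ ^ 2 / |t - s| ^ 2) ∂ν ∂μ)
      = ∫⁻ t, ∫⁻ s, ENNReal.ofReal (‖w t - w s‖ ^ 2 / |t - s| ^ 2) ∂ν ∂μ := by
    intro μ ν hμ hν
    refine lintegral_congr_ae ?_
    filter_upwards [ae_mono hμ hvw] with t ht
    refine lintegral_congr_ae ?_
    filter_upwards [ae_mono hν hvw] with s hs
    rw [ht, hs]
  have hμN : volume.restrict (Iio (0:ℝ)) ≤ volume.restrict (Iio T) :=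
    Measure.restrict_mono hsubN le_rfl
  have hμP : volume.restrict (Ioo (0:ℝ) T) ≤ volume.restrict (Iio T) :=
    Measure.restrict_mono hsubP le_rfl
  rw [convDouble _ _ le_rfl le_rfl, convDouble _ _ hμP hμP,
    show (∫⁻ t in Ioo (0:ℝ) T, ENNReal.ofReal (‖v t‖ ^ 2 / t))
      = ∫⁻ t in Ioo (0:ℝ) T, ENNReal.ofReal (‖w t‖ ^ 2 / t) from
    lintegral_congr_ae (by filter_upwards [hvwP] with t ht; rw [ht])]
  -- key inner-integral computation
  have innerN : ∀ s : ℝ, 0 < s →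
      ∫⁻ t in Iio (0:ℝ), ENNReal.ofReal (‖w t - w s‖ ^ 2 / |t - s| ^ 2)
        = ENNReal.ofReal (‖w s‖ ^ 2 / s) := by
    intro s hs
    have step1 : ∫⁻ t in Iio (0:ℝ), ENNReal.ofReal (‖w t - w s‖ ^ 2 / |t - s| ^ 2)
        = ∫⁻ t in Iio (0:ℝ),
            ENNReal.ofReal (‖w s‖ ^ 2) * ENNReal.ofReal (1 / (s - t) ^ 2) := by
      refine lintegral_congr_ae ?_
      filter_upwards [hw0] with t htw
      rw [htw, zero_sub, norm_neg, ← ENNReal.ofReal_mul (by positivity)]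
      congr 1
      rw [sq_abs, show (t - s) ^ 2 = (s - t) ^ 2 by ring]
      ring
    rw [step1, lintegral_const_mul' _ _ ENNReal.ofReal_ne_top, hardy_slice hs,
      ← ENNReal.ofReal_mul (by positivity)]
    congr 1
    ring
  -- split everything
  rw [hNP]
  simp only [lintegral_add_measure]
  have hm1 : Measurable fun t => ∫⁻ s in Iio (0:ℝ),
      ENNReal.ofReal (‖w t - w s‖ ^ 2 / |t - s| ^ 2) :=
    hFm.lintegral_prod_right'
  rw [lintegral_add_left hm1, lintegral_add_left hm1]
  -- A = 0
  have hA : ∫⁻ t in Iio (0:ℝ), ∫⁻ s in Iio (0:ℝ),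
      ENNReal.ofReal (‖w t - w s‖ ^ 2 / |t - s| ^ 2) = 0 := by
    have h1 : ∀ᵐ t ∂(volume.restrict (Iio (0:ℝ))),
        (∫⁻ s in Iio (0:ℝ), ENNReal.ofReal (‖w t - w s‖ ^ 2 / |t - s| ^ 2)) = 0 := by
      filter_upwards [hw0] with t htw
      have h2 : ∀ᵐ s ∂(volume.restrict (Iio (0:ℝ))),
          ENNReal.ofReal (‖w t - w s‖ ^ 2 / |t - s| ^ 2) = 0 := by
        filter_upwards [hw0] with s hsw
        rw [htw, hsw]
        simp
      rw [lintegral_congr_ae h2, lintegral_zero]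
    rw [lintegral_congr_ae h1, lintegral_zero]
  -- B : t ∈ N, s ∈ P — swap
  have hB : ∫⁻ t in Iio (0:ℝ), ∫⁻ s in Ioo (0:ℝ) T,
      ENNReal.ofReal (‖w t - w s‖ ^ 2 / |t - s| ^ 2)
      = ∫⁻ s in Ioo (0:ℝ) T, ENNReal.ofReal (‖w s‖ ^ 2 / s) := by
    rw [lintegral_lintegral_swap (hFm.aemeasurable)]
    refine lintegral_congr_ae ?_
    filter_upwards [ae_restrict_mem measurableSet_Ioo] with s hsmem
    exact innerN s hsmem.1
  -- C : t ∈ P, s ∈ N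
  have hC : ∫⁻ t in Ioo (0:ℝ) T, ∫⁻ s in Iio (0:ℝ),
      ENNReal.ofReal (‖w t - w s‖ ^ 2 / |t - s| ^ 2)
      = ∫⁻ t in Ioo (0:ℝ) T, ENNReal.ofReal (‖w t‖ ^ 2 / t) := by
    refine lintegral_congr_ae ?_
    filter_upwards [ae_restrict_mem measurableSet_Ioo] with t htmem
    rw [show ∫⁻ s in Iio (0:ℝ), ENNReal.ofReal (‖w t - w s‖ ^ 2 / |t - s| ^ 2)
        = ∫⁻ s in Iio (0:ℝ), ENNReal.ofReal (‖w s - w t‖ ^ 2 / |s - t| ^ 2) from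
      lintegral_congr fun s => by rw [norm_sub_rev, abs_sub_comm]]
    exact innerN t htmem.1
  rw [hA, hB, hC]
  ring
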